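/- arXiv:1602.01820 — 2 statements merged into one kernel-verified Lean document; each statement's English description precedes it below -/
import Mathlib

section
/- Fix parameters (c_σ, b_σ), (c_μ, b_μ), (c_ν, b_ν) with c_σ, c_μ, c_ν > 0 and b_σ, b_μ, b_ν ∈ ℝ∖{0}, and let Φ⁺ be the associated one-dimensional phase. Then for every K ≥ 1 there exist δ > 0 and c > 0 (depending on K and the parameters) such that: whenever (α, β) ∈ ℝ² satisfies |α|, |β|, |α−β| ≤ K, max(|α|, |β|, |α−β|) ≥ K^{−1}, and min(|α|, |β|, |α−β|) ≤ δ, one has max_{0 ≤ j ≤ 2} |∂_β^j Φ⁺(α,β)| ≥ c. (That is, when at least one of the three frequencies is small while the point stays away from the origin, the non-degeneracy of Φ⁺ already holds with derivatives up to order 2 instead of order 3.) -/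
noncomputable section

/-- `Λ_τ(x) = sgn(b_τ)·√(c_τ² x² + b_τ²)` on the real line. -/
def Lam1 (c b x : ℝ) : ℝ := Real.sign b * Real.sqrt (c ^ 2 * x ^ 2 + b ^ 2)

/-- The one-dimensional phase `Φ⁺(α,β) = Λ_σ(α) − Λ_μ(α−β) − Λ_ν(β)`. -/
def PhiP (cσ bσ cμ bμ cν bν α β : ℝ) : ℝ :=
  Lam1 cσ bσ α - Lam1 cμ bμ (α - β) - Lam1 cν bν β

/-- First derivative of `Lam1`. -/
def lam1D (c b x : ℝ) : ℝ :=
  Real.sign b * (c ^ 2 * x / Real.sqrt (c ^ 2 * x ^ 2 + b ^ 2))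

/-- Second derivative of `Lam1`. -/
def lam1DD (c b x : ℝ) : ℝ :=
  Real.sign b * (c ^ 2 * b ^ 2 / (Real.sqrt (c ^ 2 * x ^ 2 + b ^ 2)) ^ 3)

lemma q_pos (c b x : ℝ) (hb : b ≠ 0) : 0 < c ^ 2 * x ^ 2 + b ^ 2 := by positivity

lemma sqrtq_pos (c b x : ℝ) (hb : b ≠ 0) : 0 < Real.sqrt (c ^ 2 * x ^ 2 + b ^ 2) :=
  Real.sqrt_pos.2 (q_pos c b x hb)

lemma rsign_cases (b : ℝ) (hb : b ≠ 0) : Real.sign b = 1 ∨ Real.sign b = -1 := by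
  rcases hb.lt_or_gt with h | h
  · right; exact Real.sign_of_neg h
  · left; exact Real.sign_of_pos h

lemma rsign_ne_zero (b : ℝ) (hb : b ≠ 0) : Real.sign b ≠ 0 := by
  rcases rsign_cases b hb with h | h <;> rw [h] <;> norm_num

lemma rsign_mul_abs (b : ℝ) : Real.sign b * |b| = b := by
  rcases lt_trichotomy b 0 with h | h | h
  · rw [Real.sign_of_neg h, abs_of_neg h]; ring
  · simp [h]
  · rw [Real.sign_of_pos h, abs_of_pos h]; ring

lemma hasDerivAt_q (c b x : ℝ) :
    HasDerivAt (fun y : ℝ => c ^ 2 * y ^ 2 + b ^ 2) (c ^ 2 * (2 * x)) x := by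
  have h := ((hasDerivAt_pow 2 x).const_mul (c ^ 2)).add_const (b ^ 2)
  simpa using h

lemma hasDerivAt_Lam1 (c b x : ℝ) (hb : b ≠ 0) :
    HasDerivAt (Lam1 c b) (lam1D c b x) x := by
  have hq := q_pos c b x hb
  have h := ((hasDerivAt_q c b x).sqrt hq.ne').const_mul (Real.sign b)
  have hs := sqrtq_pos c b x hb
  convert h using 1
  · rfl
  · rfl
  · rfl
  unfold lam1D
  field_simp

lemma hasDerivAt_lam1D (c b x : ℝ) (hb : b ≠ 0) :
    HasDerivAt (lam1D c b) (lam1DD c b x) x := by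
  have hq := q_pos c b x hb
  have hs := sqrtq_pos c b x hb
  have hnum : HasDerivAt (fun y : ℝ => c ^ 2 * y) (c ^ 2) x := by
    simpa using (hasDerivAt_id x).const_mul (c ^ 2)
  have hden := (hasDerivAt_q c b x).sqrt hq.ne'
  have h := (hnum.div hden hs.ne').const_mul (Real.sign b)
  convert h using 1
  · rfl
  · rfl
  · rfl
  unfold lam1DD
  have h2 : Real.sqrt (c ^ 2 * x ^ 2 + b ^ 2) ^ 2 = c ^ 2 * x ^ 2 + b ^ 2 :=
    Real.sq_sqrt hq.le
  have hr' : Real.sqrt (c ^ 2 * x ^ 2 + b ^ 2) ≠ 0 := hs.ne'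
  field_simp
  linear_combination (-(Real.sign b * c ^ 2)) * h2

lemma continuous_sqrtq (c b : ℝ) : Continuous (fun x : ℝ => Real.sqrt (c ^ 2 * x ^ 2 + b ^ 2)) :=
  Real.continuous_sqrt.comp (by continuity)

lemma continuous_Lam1 (c b : ℝ) : Continuous (Lam1 c b) :=
  continuous_const.mul (continuous_sqrtq c b)

lemma continuous_lam1D (c b : ℝ) (hb : b ≠ 0) : Continuous (lam1D c b) := by
  apply continuous_const.mul
  exact (by continuity : Continuous (fun x : ℝ => c ^ 2 * x)).div (continuous_sqrtq c b)
    (fun x => (sqrtq_pos c b x hb).ne')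

lemma continuous_lam1DD (c b : ℝ) (hb : b ≠ 0) : Continuous (lam1DD c b) := by
  apply continuous_const.mul
  exact continuous_const.div ((continuous_sqrtq c b).pow 3)
    (fun x => pow_ne_zero 3 (sqrtq_pos c b x hb).ne')

lemma lam1D_zero (c b : ℝ) : lam1D c b 0 = 0 := by simp [lam1D]

lemma lam1D_ne_zero (c b x : ℝ) (hc : 0 < c) (hb : b ≠ 0) (hx : x ≠ 0) :
    lam1D c b x ≠ 0 := by
  unfold lam1D
  apply mul_ne_zero (rsign_ne_zero b hb)
  apply div_ne_zero (by positivity) (sqrtq_pos c b x hb).ne'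

/-- Key pointwise non-degeneracy on the set where one frequency vanishes. -/
lemma keyA (cσ bσ cμ bμ cν bν : ℝ)
    (hcσ : 0 < cσ) (hcμ : 0 < cμ) (hcν : 0 < cν)
    (hbσ : bσ ≠ 0) (hbμ : bμ ≠ 0) (hbν : bν ≠ 0) (α β : ℝ)
    (hmax : 0 < max |α| (max |β| |α - β|))
    (hmin : min |α| (min |β| |α - β|) ≤ 0) :
    PhiP cσ bσ cμ bμ cν bν α β ≠ 0 ∨
    lam1D cμ bμ (α - β) - lam1D cν bν β ≠ 0 ∨
    -lam1DD cμ bμ (α - β) - lam1DD cν bν β ≠ 0 := by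
  have h0 : α = 0 ∨ β = 0 ∨ α - β = 0 := by
    rcases min_le_iff.1 hmin with h | h
    · exact Or.inl (abs_nonpos_iff.1 h)
    · rcases min_le_iff.1 h with h' | h'
      · exact Or.inr (Or.inl (abs_nonpos_iff.1 h'))
      · exact Or.inr (Or.inr (abs_nonpos_iff.1 h'))
  rcases h0 with hα | hβ | hαβ
  · -- α = 0 : the hard case
    subst hα
    have hβ : β ≠ 0 := by
      intro h
      rw [h] at hmax
      simp at hmax
    by_contra hcon
    push_neg at hcon
    obtain ⟨hD0, hD1, hD2⟩ := hcon
    set u : ℝ := Real.sqrt (cμ ^ 2 * β ^ 2 + bμ ^ 2) with hu_def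
    set v : ℝ := Real.sqrt (cν ^ 2 * β ^ 2 + bν ^ 2) with hv_def
    set s : ℝ := Real.sign bμ with hs_def
    set t : ℝ := Real.sign bν with ht_def
    have hu : 0 < u := sqrtq_pos cμ bμ β hbμ
    have hv : 0 < v := sqrtq_pos cν bν β hbν
    have hu2 : u ^ 2 = cμ ^ 2 * β ^ 2 + bμ ^ 2 := Real.sq_sqrt (q_pos cμ bμ β hbμ).le
    have hv2 : v ^ 2 = cν ^ 2 * β ^ 2 + bν ^ 2 := Real.sq_sqrt (q_pos cν bν β hbν).le
    have hsq : (0 - β) ^ 2 = β ^ 2 := by ring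
    have hs1 : s = 1 ∨ s = -1 := rsign_cases bμ hbμ
    have ht1 : t = 1 ∨ t = -1 := rsign_cases bν hbν
    -- rewrite hD1
    rw [lam1D, lam1D, hsq] at hD1
    rw [lam1DD, lam1DD, hsq] at hD2
    rw [← hu_def, ← hv_def, ← hs_def, ← ht_def] at hD1 hD2
    have hE1 : s * cμ ^ 2 * v + t * cν ^ 2 * u = 0 := by
      have h : β * (s * cμ ^ 2 * v + t * cν ^ 2 * u) = 0 := by
        field_simp at hD1
        linear_combination -hD1
      rcases mul_eq_zero.1 h with h' | h'
      · exact absurd h' hβ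
      · exact h'
    have hE2 : s * (cμ ^ 2 * bμ ^ 2) * v ^ 3 + t * (cν ^ 2 * bν ^ 2) * u ^ 3 = 0 := by
      field_simp at hD2
      linear_combination -hD2
    -- signs must be opposite
    have hts : t = -s := by
      rcases hs1 with h | h <;> rcases ht1 with h' | h'
      · exfalso; rw [h, h'] at hE1
        nlinarith [mul_pos (pow_pos hcμ 2) hv, mul_pos (pow_pos hcν 2) hu]
      · rw [h, h'] <;> norm_num
      · rw [h, h'] <;> norm_num
      · exfalso; rw [h, h'] at hE1
        nlinarith [mul_pos (pow_pos hcμ 2) hv, mul_pos (pow_pos hcν 2) hu]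
    have hss : s * s = 1 := by rcases hs1 with h | h <;> rw [h] <;> norm_num
    rw [hts] at hE1 hE2
    have hmuls : s * (s * cμ ^ 2 * v + -s * cν ^ 2 * u) = 0 := by rw [hE1]; ring
    have hF1 : cμ ^ 2 * v = cν ^ 2 * u := by
      linear_combination hmuls - (cμ ^ 2 * v - cν ^ 2 * u) * hss
    have hmuls2 : s * (s * (cμ ^ 2 * bμ ^ 2) * v ^ 3 + -s * (cν ^ 2 * bν ^ 2) * u ^ 3) = 0 := by
      rw [hE2]; ring
    have hF2 : cμ ^ 2 * bμ ^ 2 * v ^ 3 = cν ^ 2 * bν ^ 2 * u ^ 3 := by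
      linear_combination hmuls2 - (cμ ^ 2 * bμ ^ 2 * v ^ 3 - cν ^ 2 * bν ^ 2 * u ^ 3) * hss
    have hcube : cν ^ 6 * u ^ 3 = cμ ^ 6 * v ^ 3 := by
      linear_combination (-(cν ^ 4 * u ^ 2) - cν ^ 2 * u * cμ ^ 2 * v - cμ ^ 4 * v ^ 2) * hF1
    have h5' : (cμ ^ 2 * v ^ 3) * (bμ ^ 2 * cν ^ 4) = (cμ ^ 2 * v ^ 3) * (bν ^ 2 * cμ ^ 4) := by
      linear_combination cν ^ 4 * hF2 + bν ^ 2 * hcube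
    have h5 : bμ ^ 2 * cν ^ 4 = bν ^ 2 * cμ ^ 4 :=
      mul_left_cancel₀ (by positivity) h5'
    have hsq2 : cμ ^ 4 * v ^ 2 = cν ^ 4 * u ^ 2 := by
      linear_combination (cμ ^ 2 * v + cν ^ 2 * u) * hF1
    have h6 : β ^ 2 * (cμ ^ 2 * cν ^ 2) * (cμ ^ 2 - cν ^ 2) = 0 := by
      linear_combination hsq2 - cμ ^ 4 * hv2 + cν ^ 4 * hu2 + h5
    have h8 : cμ ^ 2 - cν ^ 2 = 0 := by
      rcases mul_eq_zero.1 h6 with h | h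
      · exact absurd h (by positivity)
      · exact h
    have h9 : (cμ - cν) * (cμ + cν) = 0 := by linear_combination h8
    have hc : cμ = cν := by
      rcases mul_eq_zero.1 h9 with h | h
      · linarith [sub_eq_zero.1 h]
      · linarith
    have huv : v = u := by
      have := hF1
      rw [hc] at this
      exact mul_left_cancel₀ (by positivity) this
    -- derive bσ = 0 from hD0
    simp only [PhiP, Lam1] at hD0
    rw [hsq, ← hu_def, ← hv_def, ← hs_def, ← ht_def] at hD0
    have hb2 : cσ ^ 2 * 0 ^ 2 + bσ ^ 2 = bσ ^ 2 := by ring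
    rw [hb2, Real.sqrt_sq_eq_abs, rsign_mul_abs, hts, huv] at hD0
    exact hbσ (by linear_combination hD0)
  · -- β = 0
    subst hβ
    have hα : α ≠ 0 := by
      intro h; rw [h] at hmax; simp at hmax
    right; left
    rw [sub_zero, lam1D_zero, sub_zero]
    exact lam1D_ne_zero cμ bμ α hcμ hbμ hα
  · -- α - β = 0
    have hβ : β ≠ 0 := by
      intro h
      rw [hαβ] at hmax
      have : α = 0 := by rw [h] at hαβ; linarith [sub_eq_zero.1 hαβ]
      rw [this, h] at hmax
      simp at hmax
    right; left
    rw [hαβ, lam1D_zero, zero_sub]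
    simp only [neg_ne_zero]
    exact lam1D_ne_zero cν bν β hcν hbν hβ

lemma hasDerivAt_phi (cσ bσ cμ bμ cν bν : ℝ) (hbμ : bμ ≠ 0) (hbν : bν ≠ 0) (α y : ℝ) :
    HasDerivAt (fun z => PhiP cσ bσ cμ bμ cν bν α z)
      (lam1D cμ bμ (α - y) - lam1D cν bν y) y := by
  have hf : HasDerivAt (fun z : ℝ => α - z) (-1) y := by
    simpa using (hasDerivAt_id y).const_sub α
  have h1 : HasDerivAt (fun z : ℝ => Lam1 cμ bμ (α - z)) (lam1D cμ bμ (α - y) * (-1)) y := by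
    exact (hasDerivAt_Lam1 cμ bμ (α - y) hbμ).comp y hf
  have h := ((hasDerivAt_const y (Lam1 cσ bσ α)).sub h1).sub (hasDerivAt_Lam1 cν bν y hbν)
  convert h using 1
  · rfl
  · rfl
  · rfl
  ring

lemma hasDerivAt_phiD1 (cμ bμ cν bν : ℝ) (hbμ : bμ ≠ 0) (hbν : bν ≠ 0) (α y : ℝ) :
    HasDerivAt (fun z => lam1D cμ bμ (α - z) - lam1D cν bν z)
      (-lam1DD cμ bμ (α - y) - lam1DD cν bν y) y := by
  have hf : HasDerivAt (fun z : ℝ => α - z) (-1) y := by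
    simpa using (hasDerivAt_id y).const_sub α
  have h1 : HasDerivAt (fun z : ℝ => lam1D cμ bμ (α - z)) (lam1DD cμ bμ (α - y) * (-1)) y := by
    exact (hasDerivAt_lam1D cμ bμ (α - y) hbμ).comp y hf
  have h := h1.sub (hasDerivAt_lam1D cν bν y hbν)
  convert h using 1
  · rfl
  · rfl
  · rfl
  ring

lemma iteratedDeriv_phi (cσ bσ cμ bμ cν bν : ℝ) (hbμ : bμ ≠ 0) (hbν : bν ≠ 0) (α β : ℝ) :
    iteratedDeriv 0 (fun y => PhiP cσ bσ cμ bμ cν bν α y) β = PhiP cσ bσ cμ bμ cν bν α β ∧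
    iteratedDeriv 1 (fun y => PhiP cσ bσ cμ bμ cν bν α y) β
      = lam1D cμ bμ (α - β) - lam1D cν bν β ∧
    iteratedDeriv 2 (fun y => PhiP cσ bσ cμ bμ cν bν α y) β
      = -lam1DD cμ bμ (α - β) - lam1DD cν bν β := by
  have hderiv : deriv (fun y => PhiP cσ bσ cμ bμ cν bν α y)
      = fun y => lam1D cμ bμ (α - y) - lam1D cν bν y :=
    funext fun y => (hasDerivAt_phi cσ bσ cμ bμ cν bν hbμ hbν α y).deriv
  refine ⟨by simp [iteratedDeriv_zero], ?_, ?_⟩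
  · rw [iteratedDeriv_one, hderiv]
  · rw [show (2 : ℕ) = 1 + 1 from rfl, iteratedDeriv_succ, iteratedDeriv_one, hderiv]
    exact (hasDerivAt_phiD1 cμ bμ cν bν hbμ hbν α β).deriv

/-- Improved non-degeneracy of `Φ⁺` when one of the three frequencies is small
while the point stays away from the origin: some `β`-derivative of order at
most `2` is bounded below. -/
theorem statement6 (cσ bσ cμ bμ cν bν : ℝ)
    (hcσ : 0 < cσ) (hcμ : 0 < cμ) (hcν : 0 < cν)
    (hbσ : bσ ≠ 0) (hbμ : bμ ≠ 0) (hbν : bν ≠ 0) :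
    ∀ K : ℝ, 1 ≤ K → ∃ δ : ℝ, 0 < δ ∧ ∃ c : ℝ, 0 < c ∧
      ∀ α β : ℝ,
        |α| ≤ K → |β| ≤ K → |α - β| ≤ K →
        K⁻¹ ≤ max |α| (max |β| |α - β|) →
        min |α| (min |β| |α - β|) ≤ δ →
        ∃ j ≤ 2, c ≤ |iteratedDeriv j (fun y => PhiP cσ bσ cμ bμ cν bν α y) β| := by
  intro K hK
  have hK0 : (0 : ℝ) < K := lt_of_lt_of_le one_pos hK
  have hKinv : 0 < K⁻¹ := inv_pos.2 hK0
  set G : ℝ × ℝ → ℝ := fun p =>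
    max |PhiP cσ bσ cμ bμ cν bν p.1 p.2|
      (max |lam1D cμ bμ (p.1 - p.2) - lam1D cν bν p.2|
        |-lam1DD cμ bμ (p.1 - p.2) - lam1DD cν bν p.2|) with hGdef
  have hcontD0 : Continuous fun p : ℝ × ℝ => PhiP cσ bσ cμ bμ cν bν p.1 p.2 :=
    (((continuous_Lam1 cσ bσ).comp continuous_fst).sub
      ((continuous_Lam1 cμ bμ).comp (continuous_fst.sub continuous_snd))).sub
      ((continuous_Lam1 cν bν).comp continuous_snd)
  have hcontD1 : Continuous fun p : ℝ × ℝ => lam1D cμ bμ (p.1 - p.2) - lam1D cν bν p.2 :=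
    ((continuous_lam1D cμ bμ hbμ).comp (continuous_fst.sub continuous_snd)).sub
      ((continuous_lam1D cν bν hbν).comp continuous_snd)
  have hcontD2 : Continuous fun p : ℝ × ℝ => -lam1DD cμ bμ (p.1 - p.2) - lam1DD cν bν p.2 :=
    (((continuous_lam1DD cμ bμ hbμ).comp (continuous_fst.sub continuous_snd)).neg).sub
      ((continuous_lam1DD cν bν hbν).comp continuous_snd)
  have hcontG : Continuous G := hcontD0.abs.max (hcontD1.abs.max hcontD2.abs)
  have habs1 : Continuous fun p : ℝ × ℝ => |p.1| := continuous_fst.abs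
  have habs2 : Continuous fun p : ℝ × ℝ => |p.2| := continuous_snd.abs
  have habs3 : Continuous fun p : ℝ × ℝ => |p.1 - p.2| := (continuous_fst.sub continuous_snd).abs
  set Z : ℕ → Set (ℝ × ℝ) := fun n =>
    {p | |p.1| ≤ K ∧ |p.2| ≤ K ∧ |p.1 - p.2| ≤ K ∧
      K⁻¹ ≤ max |p.1| (max |p.2| |p.1 - p.2|) ∧
      min |p.1| (min |p.2| |p.1 - p.2|) ≤ 1 / (n + 1) ∧
      G p ≤ 1 / (n + 1)} with hZdef
  have hZclosed : ∀ n, IsClosed (Z n) := by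
    intro n
    exact (isClosed_le habs1 continuous_const).inter
      ((isClosed_le habs2 continuous_const).inter
        ((isClosed_le habs3 continuous_const).inter
          ((isClosed_le continuous_const (habs1.max (habs2.max habs3))).inter
            ((isClosed_le (habs1.min (habs2.min habs3)) continuous_const).inter
              (isClosed_le hcontG continuous_const)))))
  have hZcompact : ∀ n, IsCompact (Z n) := by
    intro n
    apply IsCompact.of_isClosed_subset
      ((isCompact_Icc (a := -K) (b := K)).prod (isCompact_Icc (a := -K) (b := K)))
      (hZclosed n)
    intro p hp
    obtain ⟨h1, h2, -⟩ := hp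
    exact ⟨abs_le.1 h1, abs_le.1 h2⟩
  have hZanti : Antitone Z := by
    intro m n hmn p hp
    obtain ⟨h1, h2, h3, h4, h5, h6⟩ := hp
    have hle : 1 / ((n : ℝ) + 1) ≤ 1 / ((m : ℝ) + 1) := by
      gcongr

    exact ⟨h1, h2, h3, h4, h5.trans hle, h6.trans hle⟩
  have hempty : ∃ n, Z n = ∅ := by
    by_contra hne
    push_neg at hne
    have hnon : ∀ n, (Z n).Nonempty := hne
    obtain ⟨p, hp⟩ := IsCompact.nonempty_iInter_of_directed_nonempty_isCompact_isClosed Z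
      hZanti.directed_ge hnon hZcompact hZclosed
    have hmem : ∀ n : ℕ, p ∈ Z n := Set.mem_iInter.1 hp
    obtain ⟨h1, h2, h3, h4, -, -⟩ := hmem 0
    have hmin0 : min |p.1| (min |p.2| |p.1 - p.2|) ≤ 0 := by
      by_contra hpos
      push_neg at hpos
      obtain ⟨n, hn⟩ := exists_nat_one_div_lt hpos
      exact absurd (hmem n).2.2.2.2.1 (not_le.2 hn)
    have hG0 : G p ≤ 0 := by
      by_contra hpos
      push_neg at hpos
      obtain ⟨n, hn⟩ := exists_nat_one_div_lt hpos
      exact absurd (hmem n).2.2.2.2.2 (not_le.2 hn)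
    have hmaxpos : 0 < max |p.1| (max |p.2| |p.1 - p.2|) := lt_of_lt_of_le hKinv h4
    have hGge : 0 < G p := by
      rcases keyA cσ bσ cμ bμ cν bν hcσ hcμ hcν hbσ hbμ hbν p.1 p.2 hmaxpos hmin0 with
        h | h | h
      · exact lt_of_lt_of_le (abs_pos.2 h) (le_max_left _ _)
      · exact lt_of_lt_of_le (abs_pos.2 h) ((le_max_left _ _).trans (le_max_right _ _))
      · exact lt_of_lt_of_le (abs_pos.2 h) ((le_max_right _ _).trans (le_max_right _ _))
    exact absurd hG0 (not_le.2 hGge)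
  obtain ⟨n, hZn⟩ := hempty
  refine ⟨1 / (n + 1), by positivity, 1 / (n + 1), by positivity, ?_⟩
  intro α β h1 h2 h3 h4 h5
  have hnotin : (α, β) ∉ Z n := by rw [hZn]; exact Set.notMem_empty _
  have hG : 1 / ((n : ℝ) + 1) < G (α, β) := by
    by_contra hGle
    push_neg at hGle
    exact hnotin ⟨h1, h2, h3, h4, h5, hGle⟩
  obtain ⟨hI0, hI1, hI2⟩ := iteratedDeriv_phi cσ bσ cμ bμ cν bν hbμ hbν α β
  rw [hGdef] at hG
  simp only [] at hG
  rcases lt_max_iff.1 hG with h | h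
  · exact ⟨0, by norm_num, by rw [hI0]; exact h.le⟩
  · rcases lt_max_iff.1 h with h' | h'
    · exact ⟨1, by norm_num, by rw [hI1]; exact h'.le⟩
    · exact ⟨2, le_refl 2, by rw [hI2]; exact h'.le⟩
end
end

section
/- Fix c > 0 and b_σ, b_μ, b_ν > 0 with b_σ = b_μ + b_ν, let Φ be the associated equal-speed phase, and set ρ = b_ν/b_σ. Then there exists a constant C ≥ 1, depending only on c, b_σ, b_μ, b_ν, such that for all ξ, η ∈ ℝ³: C^{−1} (1 + |ξ| + |η|)^{−5} |η − ρξ| ≤ |∇_ηΦ(ξ,η)| ≤ C |η − ρξ|. -/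
noncomputable section
open RealInnerProductSpace

abbrev E3 : Type := EuclideanSpace ℝ (Fin 3)

/-- `Λ_τ(ξ) = √(c²|ξ|² + b_τ²)` (equal speeds, positive masses). -/
def LamP (c b : ℝ) (ξ : E3) : ℝ := Real.sqrt (c ^ 2 * ‖ξ‖ ^ 2 + b ^ 2)

/-- The equal-speed phase `Φ(ξ,η) = Λ_σ(ξ) − Λ_μ(ξ−η) − Λ_ν(η)`. -/
def PhiEq (c bσ bμ bν : ℝ) (ξ η : E3) : ℝ :=
  LamP c bσ ξ - LamP c bμ (ξ - η) - LamP c bν η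

lemma hasGradientAt_lam (c b : ℝ) (hb : b ≠ 0) (x : E3) :
    HasGradientAt (fun y => LamP c b y) ((c ^ 2 / LamP c b x) • x) x := by
  have hpos : 0 < c ^ 2 * ‖x‖ ^ 2 + b ^ 2 := by positivity
  have hL : 0 < LamP c b x := Real.sqrt_pos.mpr hpos
  have h0 : HasFDerivAt (fun y : E3 => ‖y‖ ^ 2)
      (2 • (innerSL ℝ x).comp (ContinuousLinearMap.id ℝ E3)) x :=
    (hasFDerivAt_id x).norm_sq
  have h1 : HasFDerivAt (fun y : E3 => c ^ 2 * ‖y‖ ^ 2 + b ^ 2)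
      ((c ^ 2) • (2 • (innerSL ℝ x).comp (ContinuousLinearMap.id ℝ E3))) x :=
    (h0.const_mul _).add_const _
  have h2 := h1.sqrt (ne_of_gt hpos)
  rw [hasGradientAt_iff_hasFDerivAt]
  refine h2.congr_fderiv ?_
  ext y
  have hdef : Real.sqrt (c ^ 2 * ‖x‖ ^ 2 + b ^ 2) = LamP c b x := rfl
  simp only [InnerProductSpace.toDual_apply_apply, ContinuousLinearMap.smul_apply,
    ContinuousLinearMap.comp_apply, ContinuousLinearMap.id_apply, innerSL_apply_apply,
    real_inner_smul_left, smul_eq_mul, hdef]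
  field_simp
  ring

lemma gradPhi (c bσ bμ bν : ℝ) (hμ : bμ ≠ 0) (hν : bν ≠ 0) (ξ η : E3) :
    gradient (fun y => PhiEq c bσ bμ bν ξ y) η =
      (c ^ 2 / LamP c bμ (ξ - η)) • (ξ - η) - (c ^ 2 / LamP c bν η) • η := by
  have hsub : HasFDerivAt (fun y : E3 => ξ - y)
      ((0 : E3 →L[ℝ] E3) - ContinuousLinearMap.id ℝ E3) η :=
    (hasFDerivAt_const ξ η).sub (hasFDerivAt_id η)
  have hμ' := (hasGradientAt_lam c bμ hμ (ξ - η)).hasFDerivAt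
  have hA := hμ'.comp η hsub
  have hν' := (hasGradientAt_lam c bν hν η).hasFDerivAt
  have hF : HasFDerivAt (fun y => PhiEq c bσ bμ bν ξ y)
      (((0 : E3 →L[ℝ] ℝ) -
        ((InnerProductSpace.toDual ℝ E3 ((c ^ 2 / LamP c bμ (ξ - η)) • (ξ - η))).comp
          ((0 : E3 →L[ℝ] E3) - ContinuousLinearMap.id ℝ E3))) -
        InnerProductSpace.toDual ℝ E3 ((c ^ 2 / LamP c bν η) • η)) η := by
    exact ((hasFDerivAt_const (LamP c bσ ξ) η).sub hA).sub hν'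
  have hG : HasGradientAt (fun y => PhiEq c bσ bμ bν ξ y)
      ((c ^ 2 / LamP c bμ (ξ - η)) • (ξ - η) - (c ^ 2 / LamP c bν η) • η) η := by
    rw [hasGradientAt_iff_hasFDerivAt]
    refine hF.congr_fderiv ?_
    ext y
    simp only [InnerProductSpace.toDual_apply_apply, ContinuousLinearMap.sub_apply,
      ContinuousLinearMap.zero_apply, ContinuousLinearMap.comp_apply,
      ContinuousLinearMap.id_apply, inner_sub_left, zero_sub, inner_neg_right,
      ContinuousLinearMap.neg_apply, neg_neg]
  exact hG.gradient

lemma lam_sq (c b : ℝ) (hb : b ≠ 0) (x : E3) :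
    LamP c b x ^ 2 = c ^ 2 * ‖x‖ ^ 2 + b ^ 2 :=
  Real.sq_sqrt (by positivity)

lemma lam_pos (c b : ℝ) (hb : b ≠ 0) (x : E3) : 0 < LamP c b x :=
  Real.sqrt_pos.mpr (by positivity)

lemma lam_ge_b (c b : ℝ) (hb : 0 < b) (x : E3) : b ≤ LamP c b x := by
  have h1 := lam_sq c b hb.ne' x
  have h2 := lam_pos c b hb.ne' x
  nlinarith [sq_nonneg (c * ‖x‖)]

lemma lam_ge_cx (c b : ℝ) (hc : 0 < c) (hb : 0 < b) (x : E3) :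
    c * ‖x‖ ≤ LamP c b x := by
  have h1 := lam_sq c b hb.ne' x
  have h2 := lam_pos c b hb.ne' x
  have h3 : 0 ≤ c * ‖x‖ := by positivity
  nlinarith

lemma lam_le (c b : ℝ) (hc : 0 < c) (hb : 0 < b) (x : E3) :
    LamP c b x ≤ (c + b) * (1 + ‖x‖) := by
  have h3 : (0:ℝ) ≤ ‖x‖ := norm_nonneg x
  have hR : (0:ℝ) ≤ (c + b) * (1 + ‖x‖) := by positivity
  have h4 : c ^ 2 * ‖x‖ ^ 2 + b ^ 2 ≤ ((c + b) * (1 + ‖x‖)) ^ 2 := by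
    nlinarith [mul_nonneg (mul_nonneg hc.le hb.le) h3, mul_nonneg hc.le hb.le,
      mul_nonneg (mul_nonneg hc.le hc.le) h3, mul_nonneg (mul_nonneg hb.le hb.le) h3,
      sq_nonneg (b * ‖x‖), sq_nonneg (c * ‖x‖), mul_nonneg (mul_nonneg hc.le hb.le) (mul_nonneg h3 h3)]
  calc LamP c b x ≤ Real.sqrt (((c + b) * (1 + ‖x‖)) ^ 2) := Real.sqrt_le_sqrt h4
    _ = (c + b) * (1 + ‖x‖) := Real.sqrt_sq hR

lemma lam_diff_le (c b : ℝ) (hc : 0 < c) (hb : 0 < b) (x y : E3) :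
    LamP c b x - LamP c b y ≤ c * ‖x - y‖ := by
  have hx2 := lam_sq c b hb.ne' x
  have hy2 := lam_sq c b hb.ne' y
  have hxp := lam_pos c b hb.ne' x
  have hyp := lam_pos c b hb.ne' y
  have hLL : 0 < LamP c b x + LamP c b y := by linarith
  have hsum : c * ‖x‖ + c * ‖y‖ ≤ LamP c b x + LamP c b y :=
    add_le_add (lam_ge_cx c b hc hb x) (lam_ge_cx c b hc hb y)
  have hnn : ‖x‖ - ‖y‖ ≤ ‖x - y‖ := (abs_le.mp (abs_norm_sub_norm_le x y)).2
  have hmain : (LamP c b x - LamP c b y) * (LamP c b x + LamP c b y) ≤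
      (c * ‖x - y‖) * (LamP c b x + LamP c b y) := by
    have e1 : (LamP c b x - LamP c b y) * (LamP c b x + LamP c b y) =
        c ^ 2 * ((‖x‖ - ‖y‖) * (‖x‖ + ‖y‖)) := by nlinarith
    have e2 : (‖x‖ - ‖y‖) * (‖x‖ + ‖y‖) ≤ ‖x - y‖ * (‖x‖ + ‖y‖) :=
      mul_le_mul_of_nonneg_right hnn (by positivity)
    have e3 : c ^ 2 * ((‖x‖ - ‖y‖) * (‖x‖ + ‖y‖)) ≤ c ^ 2 * (‖x - y‖ * (‖x‖ + ‖y‖)) :=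
      mul_le_mul_of_nonneg_left e2 (by positivity)
    have e4 : (c * ‖x - y‖) * (c * ‖x‖ + c * ‖y‖) ≤
        (c * ‖x - y‖) * (LamP c b x + LamP c b y) :=
      mul_le_mul_of_nonneg_left hsum (by positivity)
    nlinarith
  exact (mul_le_mul_iff_of_pos_right hLL).mp hmain

lemma lam_diff (c b : ℝ) (hc : 0 < c) (hb : 0 < b) (x y : E3) :
    |LamP c b x - LamP c b y| ≤ c * ‖x - y‖ := by
  rw [abs_le]
  refine ⟨?_, lam_diff_le c b hc hb x y⟩
  have := lam_diff_le c b hc hb y x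
  rw [norm_sub_rev] at this
  linarith

lemma key_lip (c b : ℝ) (hc : 0 < c) (hb : 0 < b) (x y : E3) :
    ‖(c ^ 2 / LamP c b x) • x - (c ^ 2 / LamP c b y) • y‖ ≤
      (2 * c ^ 2 / b) * ‖x - y‖ := by
  set Lx := LamP c b x with hLx
  set Ly := LamP c b y with hLy
  have hxp : 0 < Lx := lam_pos c b hb.ne' x
  have hyp : 0 < Ly := lam_pos c b hb.ne' y
  have hbx : b ≤ Lx := lam_ge_b c b hb x
  have hby : b ≤ Ly := lam_ge_b c b hb y
  have hcy : c * ‖y‖ ≤ Ly := lam_ge_cx c b hc hb y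
  have hdiff : |Lx - Ly| ≤ c * ‖x - y‖ := lam_diff c b hc hb x y
  have hsplit : (c ^ 2 / Lx) • x - (c ^ 2 / Ly) • y =
      (c ^ 2 / Lx) • (x - y) + (c ^ 2 / Lx - c ^ 2 / Ly) • y := by
    rw [smul_sub, sub_smul]; abel
  rw [hsplit]
  have h1 : ‖(c ^ 2 / Lx) • (x - y)‖ ≤ (c ^ 2 / b) * ‖x - y‖ := by
    rw [norm_smul, Real.norm_eq_abs, abs_of_nonneg (by positivity : (0:ℝ) ≤ c ^ 2 / Lx)]
    gcongr
  have h2 : ‖(c ^ 2 / Lx - c ^ 2 / Ly) • y‖ ≤ (c ^ 2 / b) * ‖x - y‖ := by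
    rw [norm_smul, Real.norm_eq_abs]
    have e1 : c ^ 2 / Lx - c ^ 2 / Ly = c ^ 2 * (Ly - Lx) / (Lx * Ly) := by
      field_simp
    have e2 : |c ^ 2 / Lx - c ^ 2 / Ly| ≤ c ^ 2 * (c * ‖x - y‖) / (Lx * Ly) := by
      rw [e1, abs_div, abs_of_nonneg (by positivity : (0:ℝ) ≤ Lx * Ly), abs_mul,
        abs_of_nonneg (by positivity : (0:ℝ) ≤ c ^ 2)]
      apply div_le_div_of_nonneg_right _ (by positivity)
      apply mul_le_mul_of_nonneg_left _ (by positivity)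
      rw [abs_sub_comm]; exact hdiff
    calc |c ^ 2 / Lx - c ^ 2 / Ly| * ‖y‖ ≤
        (c ^ 2 * (c * ‖x - y‖) / (Lx * Ly)) * ‖y‖ :=
          mul_le_mul_of_nonneg_right e2 (norm_nonneg _)
      _ = (c ^ 2 * ‖x - y‖ / Lx) * (c * ‖y‖ / Ly) := by field_simp
      _ ≤ (c ^ 2 * ‖x - y‖ / Lx) * 1 := by
          apply mul_le_mul_of_nonneg_left _ (by positivity)
          rw [div_le_one hyp]; exact hcy
      _ = c ^ 2 * ‖x - y‖ / Lx := by ring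
      _ ≤ (c ^ 2 / b) * ‖x - y‖ := by
          rw [div_mul_eq_mul_div]
          gcongr
  calc ‖(c ^ 2 / Lx) • (x - y) + (c ^ 2 / Lx - c ^ 2 / Ly) • y‖ ≤
      ‖(c ^ 2 / Lx) • (x - y)‖ + ‖(c ^ 2 / Lx - c ^ 2 / Ly) • y‖ := norm_add_le _ _
    _ ≤ (c ^ 2 / b) * ‖x - y‖ + (c ^ 2 / b) * ‖x - y‖ := add_le_add h1 h2
    _ = (2 * c ^ 2 / b) * ‖x - y‖ := by ring

lemma key_mono (c b : ℝ) (hc : 0 < c) (hb : 0 < b) (x y : E3) :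
    c ^ 2 * b ^ 2 / (2 * LamP c b x * LamP c b y ^ 2) * ‖x - y‖ ^ 2 ≤
      ⟪(c ^ 2 / LamP c b x) • x - (c ^ 2 / LamP c b y) • y, x - y⟫ := by
  set Lx := LamP c b x with hLx
  set Ly := LamP c b y with hLy
  set p : ℝ := ⟪x, x - y⟫ with hp
  set q : ℝ := ⟪y, x - y⟫ with hq
  set n : ℝ := ‖x - y‖ with hn
  set X : ℝ := ‖x‖ with hX
  set Y : ℝ := ‖y‖ with hY
  have hxp : 0 < Lx := lam_pos c b hb.ne' x
  have hyp : 0 < Ly := lam_pos c b hb.ne' y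
  have hx2 : Lx ^ 2 = c ^ 2 * X ^ 2 + b ^ 2 := lam_sq c b hb.ne' x
  have hy2 : Ly ^ 2 = c ^ 2 * Y ^ 2 + b ^ 2 := lam_sq c b hb.ne' y
  have hcy : c * Y ≤ Ly := lam_ge_cx c b hc hb y
  have hcx : c * X ≤ Lx := lam_ge_cx c b hc hb x
  have hn0 : 0 ≤ n := norm_nonneg _
  have hX0 : 0 ≤ X := norm_nonneg _
  have hY0 : 0 ≤ Y := norm_nonneg _
  -- the inner product in question
  have hinner : (⟪(c ^ 2 / Lx) • x - (c ^ 2 / Ly) • y, x - y⟫ : ℝ) =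
      c ^ 2 / Lx * p - c ^ 2 / Ly * q := by
    rw [inner_sub_left, real_inner_smul_left, real_inner_smul_left]
  -- s = n²
  have hs : p - q = n ^ 2 := by
    rw [hp, hq, hn, ← inner_sub_left, real_inner_self_eq_norm_sq]
  -- p + q = X² - Y²
  have hpq : p + q = X ^ 2 - Y ^ 2 := by
    have e : (⟪x + y, x - y⟫ : ℝ) = X ^ 2 - Y ^ 2 := by
      rw [inner_sub_right, inner_add_left, inner_add_left,
        real_inner_self_eq_norm_sq, real_inner_self_eq_norm_sq, real_inner_comm x y]
      ring
    rw [hp, hq, ← inner_add_left, e]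
  -- Cauchy-Schwarz
  have hqcs : |q| ≤ Y * n := abs_real_inner_le_norm y (x - y)
  have hpqcs : |p + q| ≤ (X + Y) * n := by
    rw [hp, hq, ← inner_add_left]
    calc |(⟪x + y, x - y⟫ : ℝ)| ≤ ‖x + y‖ * ‖x - y‖ := abs_real_inner_le_norm _ _
      _ ≤ (X + Y) * n := by rw [← hn]; gcongr; exact norm_add_le x y
  rw [hinner]
  clear_value Lx Ly p q n X Y
  clear hp hq hn hX hY hLx hLy
  -- pure real arithmetic from here
  have hfactor : (Lx - Ly) * (Lx + Ly) = c ^ 2 * (p + q) := by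
    rw [hpq]; linear_combination hx2 - hy2
  have habs : |q * (p + q)| ≤ (Y * n) * ((X + Y) * n) := by
    rw [abs_mul]
    exact mul_le_mul hqcs hpqcs (abs_nonneg _) (by positivity)
  have hsum : c * X + c * Y ≤ Lx + Ly := add_le_add hcx hcy
  have hclaim1 : -(c * Y * n ^ 2) ≤ q * (Ly - Lx) := by
    have e1 : q * (Ly - Lx) * (Lx + Ly) = -(c ^ 2 * (q * (p + q))) := by
      linear_combination (-q) * hfactor
    have e2 : c ^ 2 * (q * (p + q)) ≤ c ^ 2 * ((Y * n) * ((X + Y) * n)) :=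
      mul_le_mul_of_nonneg_left (le_trans (le_abs_self _) habs) (sq_nonneg c)
    have h4 : c * (X + Y) ≤ Lx + Ly := by linarith
    have h5 : 0 ≤ c * Y * n ^ 2 := by positivity
    have e3 : c ^ 2 * ((Y * n) * ((X + Y) * n)) ≤ (c * Y * n ^ 2) * (Lx + Ly) := by
      calc c ^ 2 * ((Y * n) * ((X + Y) * n)) = (c * Y * n ^ 2) * (c * (X + Y)) := by ring
        _ ≤ (c * Y * n ^ 2) * (Lx + Ly) := mul_le_mul_of_nonneg_left h4 h5
    have hLL : 0 < Lx + Ly := by linarith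
    have e4 : -(c * Y * n ^ 2) * (Lx + Ly) ≤ q * (Ly - Lx) * (Lx + Ly) := by
      rw [e1]; linarith
    exact (mul_le_mul_iff_of_pos_right hLL).mp e4
  have hLycy : b ^ 2 / (2 * Ly) ≤ Ly - c * Y := by
    have e1 : (Ly - c * Y) * (Ly + c * Y) = b ^ 2 := by linear_combination hy2
    have e3 : 0 ≤ Ly - c * Y := by linarith
    have e2 : Ly + c * Y ≤ 2 * Ly := by linarith
    rw [div_le_iff₀ (by linarith : (0:ℝ) < 2 * Ly)]
    calc b ^ 2 = (Ly - c * Y) * (Ly + c * Y) := e1.symm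
      _ ≤ (Ly - c * Y) * (2 * Ly) := mul_le_mul_of_nonneg_left e2 e3
  have hnum : n ^ 2 * (b ^ 2 / (2 * Ly)) ≤ p * Ly - q * Lx := by
    have e1 : p * Ly - q * Lx = n ^ 2 * Ly + q * (Ly - Lx) := by
      have hpn : p = n ^ 2 + q := by linarith
      rw [hpn]; ring
    have e2 : n ^ 2 * (b ^ 2 / (2 * Ly)) ≤ n ^ 2 * (Ly - c * Y) :=
      mul_le_mul_of_nonneg_left hLycy (by positivity)
    linarith [e1, e2, hclaim1]
  have efin : c ^ 2 / Lx * p - c ^ 2 / Ly * q = c ^ 2 * (p * Ly - q * Lx) / (Lx * Ly) := by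
    field_simp
  have elhs : c ^ 2 * b ^ 2 / (2 * Lx * Ly ^ 2) * n ^ 2 =
      c ^ 2 * (n ^ 2 * (b ^ 2 / (2 * Ly))) / (Lx * Ly) := by
    field_simp
  rw [efin, elhs]
  gcongr

lemma lam_smul (c b t : ℝ) (ht : 0 < t) (ξ : E3) :
    LamP c (t * b) (t • ξ) = t * LamP c b ξ := by
  unfold LamP
  rw [norm_smul, Real.norm_eq_abs, abs_of_pos ht]
  rw [show c ^ 2 * (t * ‖ξ‖) ^ 2 + (t * b) ^ 2 = t ^ 2 * (c ^ 2 * ‖ξ‖ ^ 2 + b ^ 2) by ring]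
  rw [Real.sqrt_mul (by positivity), Real.sqrt_sq ht.le]

lemma res_eq (c bσ bμ bν : ℝ) (hσ : 0 < bσ) (hμ : 0 < bμ) (hν : 0 < bν)
    (hb : bσ = bμ + bν) (ξ : E3) :
    (c ^ 2 / LamP c bμ (ξ - (bν / bσ) • ξ)) • (ξ - (bν / bσ) • ξ) =
      (c ^ 2 / LamP c bν ((bν / bσ) • ξ)) • ((bν / bσ) • ξ) := by
  have hξ : ξ - (bν / bσ) • ξ = (bμ / bσ) • ξ := by
    rw [show ξ - (bν / bσ) • ξ = (1 - bν / bσ) • ξ by rw [sub_smul, one_smul]]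
    congr 1
    field_simp
    linarith
  rw [hξ]
  have hμ' : bμ = (bμ / bσ) * bσ := by field_simp
  have hν' : bν = (bν / bσ) * bσ := by field_simp
  have h1 : LamP c bμ ((bμ / bσ) • ξ) = (bμ / bσ) * LamP c bσ ξ := by
    nth_rewrite 1 [hμ']
    exact lam_smul c bσ (bμ / bσ) (by positivity) ξ
  have h2 : LamP c bν ((bν / bσ) • ξ) = (bν / bσ) * LamP c bσ ξ := by
    nth_rewrite 1 [hν']
    exact lam_smul c bσ (bν / bσ) (by positivity) ξ
  have hL : 0 < LamP c bσ ξ := lam_pos c bσ hσ.ne' ξ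
  rw [h1, h2, smul_smul, smul_smul]
  congr 1
  field_simp

/-- In the fully resonant equal-speed case `b_σ = b_μ + b_ν`, the size of
`∇_ηΦ(ξ,η)` is comparable to the distance `|η − ρξ|` to the resonance line,
with weights polynomial in the frequencies. -/
theorem statement10 (c bσ bμ bν : ℝ) (hc : 0 < c)
    (hσ : 0 < bσ) (hμ : 0 < bμ) (hν : 0 < bν) (hb : bσ = bμ + bν) :
    ∃ C : ℝ, 1 ≤ C ∧ ∀ ξ η : E3,
      C⁻¹ * (1 + ‖ξ‖ + ‖η‖) ^ (-5 : ℤ) * ‖η - (bν / bσ) • ξ‖ ≤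
        ‖gradient (fun y => PhiEq c bσ bμ bν ξ y) η‖ ∧
      ‖gradient (fun y => PhiEq c bσ bμ bν ξ y) η‖ ≤ C * ‖η - (bν / bσ) • ξ‖ := by
  have h1 : (0:ℝ) < 2 * c ^ 2 / bμ := by positivity
  have h2 : (0:ℝ) < 2 * c ^ 2 / bν := by positivity
  have h3 : (0:ℝ) < 2 * (c + bν) ^ 3 / (c ^ 2 * bν ^ 2) := by positivity
  refine ⟨1 + 2 * c ^ 2 / bμ + 2 * c ^ 2 / bν + 2 * (c + bν) ^ 3 / (c ^ 2 * bν ^ 2),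
    by linarith, fun ξ η => ?_⟩
  set C : ℝ := 1 + 2 * c ^ 2 / bμ + 2 * c ^ 2 / bν + 2 * (c + bν) ^ 3 / (c ^ 2 * bν ^ 2)
    with hCdef
  have hC1 : (1:ℝ) ≤ C := by rw [hCdef]; linarith
  have hCpos : (0:ℝ) < C := by linarith
  set ρ : ℝ := bν / bσ with hρ
  have hρpos : 0 < ρ := by positivity
  have hρle : ρ ≤ 1 := by rw [hρ, div_le_one hσ]; linarith
  set u : E3 := η - ρ • ξ with hu
  set A : E3 := (c ^ 2 / LamP c bμ (ξ - η)) • (ξ - η) with hA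
  set B : E3 := (c ^ 2 / LamP c bν η) • η with hB
  set A' : E3 := (c ^ 2 / LamP c bμ (ξ - ρ • ξ)) • (ξ - ρ • ξ) with hA'
  set B' : E3 := (c ^ 2 / LamP c bν (ρ • ξ)) • (ρ • ξ) with hB'
  have hgrad : gradient (fun y => PhiEq c bσ bμ bν ξ y) η = A - B :=
    gradPhi c bσ bμ bν hμ.ne' hν.ne' ξ η
  have hres : A' = B' := res_eq c bσ bμ bν hσ hμ hν hb ξ
  have hueq : (ξ - η) - (ξ - ρ • ξ) = -u := by rw [hu]; abel
  have hnu : ‖(ξ - η) - (ξ - ρ • ξ)‖ = ‖u‖ := by rw [hueq, norm_neg]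
  -- upper bound
  have hupper : ‖A - B‖ ≤ C * ‖u‖ := by
    have hsplit : A - B = (A - A') - (B - B') := by rw [hres]; abel
    have hl1 : ‖A - A'‖ ≤ (2 * c ^ 2 / bμ) * ‖u‖ := by
      have := key_lip c bμ hc hμ (ξ - η) (ξ - ρ • ξ)
      rwa [hnu] at this
    have hl2 : ‖B - B'‖ ≤ (2 * c ^ 2 / bν) * ‖u‖ := key_lip c bν hc hν η (ρ • ξ)
    calc ‖A - B‖ = ‖(A - A') - (B - B')‖ := by rw [hsplit]
      _ ≤ ‖A - A'‖ + ‖B - B'‖ := norm_sub_le _ _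
      _ ≤ (2 * c ^ 2 / bμ) * ‖u‖ + (2 * c ^ 2 / bν) * ‖u‖ := add_le_add hl1 hl2
      _ = (2 * c ^ 2 / bμ + 2 * c ^ 2 / bν) * ‖u‖ := by ring
      _ ≤ C * ‖u‖ := by
          apply mul_le_mul_of_nonneg_right _ (norm_nonneg u)
          rw [hCdef]; linarith
  -- lower bound
  set K : ℝ := c ^ 2 * bν ^ 2 / (2 * LamP c bν η * LamP c bν (ρ • ξ) ^ 2) with hK
  have hm2 : K * ‖u‖ ^ 2 ≤ ⟪B - B', u⟫ := by
    exact key_mono c bν hc hν η (ρ • ξ)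
  have hm1 : 0 ≤ ⟪A - A', -u⟫ := by
    have h := key_mono c bμ hc hμ (ξ - η) (ξ - ρ • ξ)
    rw [hueq] at h
    refine le_trans ?_ h
    have p1 := lam_pos c bμ hμ.ne' (ξ - η)
    have p2 := lam_pos c bμ hμ.ne' (ξ - ρ • ξ)
    positivity
  have hip : (⟪A - B, -u⟫ : ℝ) = ⟪A - A', -u⟫ + ⟪B - B', u⟫ := by
    have e : (⟪A', u⟫ : ℝ) = ⟪B', u⟫ := by rw [hres]
    simp only [inner_sub_left, inner_neg_right]
    linarith
  have hcs : (⟪A - B, -u⟫ : ℝ) ≤ ‖A - B‖ * ‖u‖ := by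
    calc (⟪A - B, -u⟫ : ℝ) ≤ ‖A - B‖ * ‖-u‖ := real_inner_le_norm _ _
      _ = ‖A - B‖ * ‖u‖ := by rw [norm_neg]
  have hmain : K * ‖u‖ ^ 2 ≤ ‖A - B‖ * ‖u‖ := by
    have h' : K * ‖u‖ ^ 2 ≤ ⟪A - B, -u⟫ := by rw [hip]; linarith
    linarith
  have hKu : K * ‖u‖ ≤ ‖A - B‖ := by
    rcases eq_or_lt_of_le (norm_nonneg u) with h0 | h0
    · rw [← h0, mul_zero]; exact norm_nonneg (A - B)
    · have h' : K * ‖u‖ * ‖u‖ ≤ ‖A - B‖ * ‖u‖ := by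
        rw [mul_assoc, ← pow_two]; exact hmain
      exact le_of_mul_le_mul_right h' h0
  set X : ℝ := 1 + ‖ξ‖ + ‖η‖ with hX
  have hX1 : (1:ℝ) ≤ X := by
    rw [hX]; linarith [norm_nonneg ξ, norm_nonneg η]
  have hXpos : (0:ℝ) < X := by linarith
  have hLη : LamP c bν η ≤ (c + bν) * X := by
    refine le_trans (lam_le c bν hc hν η) ?_
    have h' : (1:ℝ) + ‖η‖ ≤ X := by rw [hX]; linarith [norm_nonneg ξ]
    exact mul_le_mul_of_nonneg_left h' (by positivity)
  have hLρ : LamP c bν (ρ • ξ) ≤ (c + bν) * X := by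
    refine le_trans (lam_le c bν hc hν (ρ • ξ)) ?_
    have hsm : ‖ρ • ξ‖ ≤ ‖ξ‖ := by
      rw [norm_smul, Real.norm_eq_abs, abs_of_pos hρpos]
      exact mul_le_of_le_one_left (norm_nonneg ξ) hρle
    have h' : (1:ℝ) + ‖ρ • ξ‖ ≤ X := by rw [hX]; linarith [norm_nonneg η]
    exact mul_le_mul_of_nonneg_left h' (by positivity)
  have p1 := lam_pos c bν hν.ne' η
  have p2 := lam_pos c bν hν.ne' (ρ • ξ)
  have hD : 0 < 2 * LamP c bν η * LamP c bν (ρ • ξ) ^ 2 := by positivity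
  have hDle : 2 * LamP c bν η * LamP c bν (ρ • ξ) ^ 2 ≤
      2 * ((c + bν) * X) * ((c + bν) * X) ^ 2 := by
    have q1 : LamP c bν (ρ • ξ) ^ 2 ≤ ((c + bν) * X) ^ 2 :=
      pow_le_pow_left₀ p2.le hLρ 2
    have q2 : LamP c bν η * LamP c bν (ρ • ξ) ^ 2 ≤ ((c + bν) * X) * ((c + bν) * X) ^ 2 :=
      mul_le_mul hLη q1 (sq_nonneg _) (by positivity)
    linarith
  have hKlow : c ^ 2 * bν ^ 2 / (2 * ((c + bν) * X) * ((c + bν) * X) ^ 2) ≤ K := by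
    rw [hK]
    exact div_le_div_of_nonneg_left (by positivity) hD hDle
  have hzz : X ^ (-5 : ℤ) = (X ^ 5)⁻¹ := by
    rw [zpow_neg]
    norm_cast
  have hc5 : C⁻¹ ≤ c ^ 2 * bν ^ 2 / (2 * (c + bν) ^ 3) := by
    have hCge : 2 * (c + bν) ^ 3 / (c ^ 2 * bν ^ 2) ≤ C := by rw [hCdef]; linarith
    calc C⁻¹ ≤ (2 * (c + bν) ^ 3 / (c ^ 2 * bν ^ 2))⁻¹ := by
          exact inv_anti₀ h3 hCge
      _ = c ^ 2 * bν ^ 2 / (2 * (c + bν) ^ 3) := by rw [inv_div]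
  have h53 : (X ^ 5)⁻¹ ≤ (X ^ 3)⁻¹ := by
    apply inv_anti₀ (by positivity)
    exact pow_le_pow_right₀ hX1 (by norm_num)
  have hfin : C⁻¹ * (X ^ 5)⁻¹ * ‖u‖ ≤ K * ‖u‖ := by
    apply mul_le_mul_of_nonneg_right _ (norm_nonneg u)
    calc C⁻¹ * (X ^ 5)⁻¹ ≤ (c ^ 2 * bν ^ 2 / (2 * (c + bν) ^ 3)) * (X ^ 3)⁻¹ :=
        mul_le_mul hc5 h53 (by positivity) (by positivity)
      _ = c ^ 2 * bν ^ 2 / (2 * ((c + bν) * X) * ((c + bν) * X) ^ 2) := by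
          field_simp
      _ ≤ K := hKlow
  rw [hgrad, hzz]
  exact ⟨le_trans hfin hKu, hupper⟩
end
end
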